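/- Small categories, anafunctors between them, and natural transformations between anafunctors form a bicategory, in which: the identity anafunctor on X has specification cover the identity on Ob X; the composite of anafunctors x : X → Y (with specifications S, cover j) and y : Y → Z (with specifications T, cover k) has specifications {(a, b) in S × T : k b = x₁ a} with cover (a, b) ↦ j a; and the vertical composite of natural transformations χ : x ⟹ y and ψ : y ⟹ z (all three anafunctors from X to Y) is given by (χ;ψ)(a, c) = χ(a, b) ≫ ψ(b, c) for any specification b of y whose underlying object equals that of a (this value being independent of the choice of b). -/

import Mathlib

universe u

open CategoryTheory


/-- A bundled small category. -/
structure SmallCat : Type (u + 1) where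
  α : Type u
  str : SmallCategory α

attribute [instance] SmallCat.str

/-- An anafunctor between small categories: a specification type `S` with a surjective
cover of the objects of `X`, together with functorial object and morphism parts. -/
structure Anafunctor (X Y : SmallCat.{u}) : Type (u + 1) where
  S : Type u
  cov : S → X.α
  cov_surj : Function.Surjective cov
  obj : S → Y.α
  map : ∀ a b : S, (cov a ⟶ cov b) → (obj a ⟶ obj b)
  map_id : ∀ a : S, map a a (𝟙 (cov a)) = 𝟙 (obj a)
  map_comp : ∀ (a b c : S) (f : cov a ⟶ cov b) (g : cov b ⟶ cov c),
    map a c (f ≫ g) = map a b f ≫ map b c g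

/-- A natural transformation between anafunctors. -/
structure AnaNat {X Y : SmallCat.{u}} (x y : Anafunctor X Y) : Type u where
  app : ∀ (a : x.S) (b : y.S), x.cov a = y.cov b → (x.obj a ⟶ y.obj b)
  nat : ∀ (a a' : x.S) (b b' : y.S) (h : x.cov a = y.cov b) (h' : x.cov a' = y.cov b')
    (f : x.cov a ⟶ x.cov a'),
    x.map a a' f ≫ app a' b' h' =
      app a b h ≫ y.map b b' (eqToHom h.symm ≫ f ≫ eqToHom h')

/-- The identity anafunctor, whose specification cover is the identity. -/
def anaId (X : SmallCat.{u}) : Anafunctor X X where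
  S := X.α
  cov := id
  cov_surj := Function.surjective_id
  obj := id
  map := fun _ _ f => f
  map_id := fun _ => rfl
  map_comp := fun _ _ _ _ _ => rfl

/-- The composite of anafunctors, whose specifications are pairs `(a, b)` of
specifications with `k b = x₁ a`, covered by `(a, b) ↦ j a`. -/
def anaComp {X Y Z : SmallCat.{u}} (x : Anafunctor X Y) (y : Anafunctor Y Z) :
    Anafunctor X Z where
  S := {p : x.S × y.S // y.cov p.2 = x.obj p.1}
  cov := fun p => x.cov p.1.1
  cov_surj := by
    intro a
    obtain ⟨s, hs⟩ := x.cov_surj a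
    obtain ⟨t, ht⟩ := y.cov_surj (x.obj s)
    exact ⟨⟨(s, t), ht⟩, hs⟩
  obj := fun p => y.obj p.1.2
  map := fun p q f =>
    y.map p.1.2 q.1.2 (eqToHom p.2 ≫ x.map p.1.1 q.1.1 f ≫ eqToHom q.2.symm)
  map_id := by
    intro p
    try dsimp only
    rw [x.map_id]
    have h : eqToHom p.2 ≫ 𝟙 (x.obj p.1.1) ≫ eqToHom p.2.symm = 𝟙 (y.cov p.1.2) := by
      simp
    rw [h, y.map_id]
  map_comp := by
    intro p q r f g
    try dsimp only
    rw [x.map_comp, ← y.map_comp]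
    congr 1
    simp


attribute [reducible] anaComp anaId

variable {X Y : SmallCat.{u}}

@[ext] theorem AnaNat.ext' {x y : Anafunctor X Y} {χ ψ : AnaNat x y}
    (w : ∀ a b h, χ.app a b h = ψ.app a b h) : χ = ψ := by
  cases χ; cases ψ
  congr 1
  funext a b h
  exact w a b h

/-- the app at a different target spec -/
theorem AnaNat.app_eq {x y : Anafunctor X Y} (χ : AnaNat x y) (a : x.S) (b b' : y.S)
    (h : x.cov a = y.cov b) (h' : x.cov a = y.cov b') :
    χ.app a b' h' = χ.app a b h ≫ y.map b b' (eqToHom (h.symm.trans h')) := by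
  have := χ.nat a a b b' h h' (𝟙 _)
  rw [x.map_id, Category.id_comp] at this
  rw [this]
  congr 1
  congr 1
  simp

/-- Generalized component of a natural transformation along an arbitrary morphism. -/
noncomputable def AnaNat.gApp {x y : Anafunctor X Y} (χ : AnaNat x y) (a : x.S) (b : y.S)
    (u : x.cov a ⟶ y.cov b) : x.obj a ⟶ y.obj b :=
  χ.app a (y.cov_surj (x.cov a)).choose (y.cov_surj (x.cov a)).choose_spec.symm ≫
    y.map _ b (eqToHom (y.cov_surj (x.cov a)).choose_spec ≫ u)

theorem AnaNat.gApp_eq {x y : Anafunctor X Y} (χ : AnaNat x y) (a : x.S) (b : y.S)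
    (u : x.cov a ⟶ y.cov b) (b' : y.S) (hb' : y.cov b' = x.cov a) :
    χ.gApp a b u = χ.app a b' hb'.symm ≫ y.map b' b (eqToHom hb' ≫ u) := by
  set b₀ := (y.cov_surj (x.cov a)).choose with hb₀def
  have hb₀ : y.cov b₀ = x.cov a := (y.cov_surj (x.cov a)).choose_spec
  rw [gApp]
  rw [χ.app_eq a b' b₀ hb'.symm hb₀.symm]
  rw [Category.assoc, ← y.map_comp]
  congr 2
  simp

theorem AnaNat.app_comp_map {x y : Anafunctor X Y} (χ : AnaNat x y) (a : x.S) (b b' : y.S)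
    (h : x.cov a = y.cov b) (v : y.cov b ⟶ y.cov b') :
    χ.app a b h ≫ y.map b b' v = χ.gApp a b' (eqToHom h ≫ v) := by
  rw [χ.gApp_eq a b' _ b h.symm]
  congr 2
  simp

theorem AnaNat.gApp_eqToHom {x y : Anafunctor X Y} (χ : AnaNat x y) (a : x.S) (b : y.S)
    (h : x.cov a = y.cov b) : χ.gApp a b (eqToHom h) = χ.app a b h := by
  rw [χ.gApp_eq a b _ b h.symm]
  have : eqToHom h.symm ≫ eqToHom h = 𝟙 _ := by simp
  rw [this, y.map_id, Category.comp_id]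

theorem AnaNat.gApp_comp_map {x y : Anafunctor X Y} (χ : AnaNat x y) (a : x.S) (b b' : y.S)
    (u : x.cov a ⟶ y.cov b) (v : y.cov b ⟶ y.cov b') :
    χ.gApp a b u ≫ y.map b b' v = χ.gApp a b' (u ≫ v) := by
  set b₀ := (y.cov_surj (x.cov a)).choose with hb₀def
  have hb₀ : y.cov b₀ = x.cov a := (y.cov_surj (x.cov a)).choose_spec
  rw [χ.gApp_eq a b u b₀ hb₀, χ.gApp_eq a b' (u ≫ v) b₀ hb₀]
  rw [Category.assoc, ← y.map_comp]
  congr 2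
  simp

theorem AnaNat.map_comp_gApp {x y : Anafunctor X Y} (χ : AnaNat x y) (a a' : x.S) (b : y.S)
    (f : x.cov a ⟶ x.cov a') (u : x.cov a' ⟶ y.cov b) :
    x.map a a' f ≫ χ.gApp a' b u = χ.gApp a b (f ≫ u) := by
  set b₀ := (y.cov_surj (x.cov a')).choose with hb₀def
  have hb₀ : y.cov b₀ = x.cov a' := (y.cov_surj (x.cov a')).choose_spec
  set b₁ := (y.cov_surj (x.cov a)).choose with hb₁def
  have hb₁ : y.cov b₁ = x.cov a := (y.cov_surj (x.cov a)).choose_spec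
  rw [χ.gApp_eq a' b u b₀ hb₀, χ.gApp_eq a b (f ≫ u) b₁ hb₁]
  have := χ.nat a a' b₁ b₀ hb₁.symm hb₀.symm f
  rw [← Category.assoc, this, Category.assoc, ← y.map_comp]
  congr 2
  simp



@[simp] theorem eqToHom_self' {C : Type*} [Category C] {a : C} (h : a = a) :
    eqToHom h = 𝟙 a := rfl

@[simp] theorem Anafunctor.map_id'' {X Y : SmallCat.{u}} (x : Anafunctor X Y) (a : x.S) :
    x.map a a (𝟙 (x.cov a)) = 𝟙 (x.obj a) := x.map_id a

@[simp] theorem Anafunctor.map_map {X Y : SmallCat.{u}} (x : Anafunctor X Y) (a b c : x.S)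
    (f : x.cov a ⟶ x.cov b) (g : x.cov b ⟶ x.cov c) :
    x.map a b f ≫ x.map b c g = x.map a c (f ≫ g) := (x.map_comp a b c f g).symm

@[simp] theorem Anafunctor.map_map_assoc {X Y : SmallCat.{u}} (x : Anafunctor X Y)
    (a b c : x.S) (f : x.cov a ⟶ x.cov b) (g : x.cov b ⟶ x.cov c) {T : Y.α}
    (t : x.obj c ⟶ T) :
    x.map a b f ≫ x.map b c g ≫ t = x.map a c (f ≫ g) ≫ t := by
  rw [← Category.assoc, Anafunctor.map_map]
/-- The identity natural transformation on an anafunctor. -/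
def anaNatId {X Y : SmallCat.{u}} (x : Anafunctor X Y) : AnaNat x x where
  app a b h := x.map a b (eqToHom h)
  nat a a' b b' h h' f := by
    rw [← x.map_comp, ← x.map_comp]
    congr 1
    simp

/-- Vertical composition of natural transformations between anafunctors. -/
noncomputable def anaNatComp {X Y : SmallCat.{u}} {x y z : Anafunctor X Y}
    (χ : AnaNat x y) (ψ : AnaNat y z) : AnaNat x z where
  app a c h :=
    χ.app a (y.cov_surj (x.cov a)).choose (y.cov_surj (x.cov a)).choose_spec.symm ≫
      ψ.gApp (y.cov_surj (x.cov a)).choose c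
        (eqToHom ((y.cov_surj (x.cov a)).choose_spec.trans h))
  nat a a' c c' h h' f := by
    set b := (y.cov_surj (x.cov a)).choose with hbdef
    have hb : y.cov b = x.cov a := (y.cov_surj (x.cov a)).choose_spec
    set b' := (y.cov_surj (x.cov a')).choose with hb'def
    have hb' : y.cov b' = x.cov a' := (y.cov_surj (x.cov a')).choose_spec
    have hn := χ.nat a a' b b' hb.symm hb'.symm f
    rw [← Category.assoc, hn, Category.assoc, Category.assoc]
    congr 1
    rw [AnaNat.map_comp_gApp, AnaNat.gApp_comp_map]
    congr 1
    simp

/-- Characterization of the vertical composite, independent of choice of witness. -/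
theorem anaNatComp_app {X Y : SmallCat.{u}} {x y z : Anafunctor X Y}
    (χ : AnaNat x y) (ψ : AnaNat y z) (a : x.S) (c : z.S) (h : x.cov a = z.cov c)
    (b : y.S) (hb : y.cov b = x.cov a) :
    (anaNatComp χ ψ).app a c h = χ.app a b hb.symm ≫ ψ.app b c (hb.trans h) := by
  set b₀ := (y.cov_surj (x.cov a)).choose with hb₀def
  have hb₀ : y.cov b₀ = x.cov a := (y.cov_surj (x.cov a)).choose_spec
  show χ.app a b₀ hb₀.symm ≫ ψ.gApp b₀ c (eqToHom (hb₀.trans h)) = _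
  rw [χ.app_eq a b b₀ hb.symm hb₀.symm, Category.assoc, AnaNat.map_comp_gApp]
  congr 1
  rw [← AnaNat.gApp_eqToHom ψ b c (hb.trans h)]
  congr 1
  simp

noncomputable instance anaCategory (X Y : SmallCat.{u}) : Category (Anafunctor X Y) where
  Hom x y := AnaNat x y
  id x := anaNatId x
  comp χ ψ := anaNatComp χ ψ
  id_comp {x y} χ := by
    apply AnaNat.ext'
    intro a c h
    show (anaNatComp (anaNatId x) χ).app a c h = _
    rw [anaNatComp_app _ _ a c h a rfl]
    show x.map a a (eqToHom rfl) ≫ _ = _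
    rw [eqToHom_refl, x.map_id, Category.id_comp]
  comp_id {x y} χ := by
    apply AnaNat.ext'
    intro a c h
    show (anaNatComp χ (anaNatId y)).app a c h = _
    rw [anaNatComp_app _ _ a c h c h.symm]
    show _ ≫ y.map c c (eqToHom _) = _
    rw [eqToHom_refl, y.map_id, Category.comp_id]
  assoc {w x y z} χ ψ φ := by
    apply AnaNat.ext'
    intro a d h
    obtain ⟨b, hb⟩ := x.cov_surj (w.cov a)
    obtain ⟨c, hc⟩ := y.cov_surj (w.cov a)
    show (anaNatComp (anaNatComp χ ψ) φ).app a d h = (anaNatComp χ (anaNatComp ψ φ)).app a d h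
    rw [anaNatComp_app _ _ a d h c hc, anaNatComp_app _ _ a c hc.symm b hb,
      anaNatComp_app _ _ a d h b hb, anaNatComp_app _ _ b d (hb.trans h) c (hc.trans hb.symm),
      Category.assoc]
/-- A strict reindexing datum giving an isomorphism of anafunctors. -/
structure PreIso {X Y : SmallCat.{u}} (u v : Anafunctor X Y) where
  e : u.S → v.S
  hcov : ∀ a, v.cov (e a) = u.cov a
  hobj : ∀ a, v.obj (e a) = u.obj a
  hmap : ∀ (a b : u.S) (f : u.cov a ⟶ u.cov b),
    u.map a b f = eqToHom (hobj a).symm ≫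
      v.map (e a) (e b) (eqToHom (hcov a) ≫ f ≫ eqToHom (hcov b).symm) ≫ eqToHom (hobj b)

variable {X Y : SmallCat.{u}} {u v : Anafunctor X Y}

def PreIso.fwd (P : PreIso u v) : AnaNat u v where
  app a b h := eqToHom (P.hobj a).symm ≫ v.map (P.e a) b (eqToHom ((P.hcov a).trans h))
  nat a a' b b' h h' f := by
    rw [P.hmap a a' f]
    simp only [Category.assoc, eqToHom_trans, eqToHom_trans_assoc, eqToHom_self',
      eqToHom_refl, Category.comp_id, Category.id_comp]
    congr 1
    rw [← v.map_comp, ← v.map_comp]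
    congr 1
    simp

def PreIso.bwd (P : PreIso u v) : AnaNat v u where
  app b a h := v.map b (P.e a) (eqToHom (h.trans (P.hcov a).symm)) ≫ eqToHom (P.hobj a)
  nat b b' a a' h h' f := by
    rw [P.hmap a a' _]
    simp only [Category.assoc, eqToHom_trans, eqToHom_refl, Category.comp_id, Category.id_comp,
      eqToHom_trans_assoc]
    rw [← Category.assoc, ← v.map_comp, ← Category.assoc, ← v.map_comp]
    congr 2
    simp

theorem PreIso.fwd_gApp (P : PreIso u v) (a : u.S) (b : v.S) (w : u.cov a ⟶ v.cov b) :
    P.fwd.gApp a b w = eqToHom (P.hobj a).symm ≫ v.map (P.e a) b (eqToHom (P.hcov a) ≫ w) := by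
  rw [AnaNat.gApp_eq P.fwd a b w (P.e a) (P.hcov a)]
  show (eqToHom _ ≫ v.map _ _ _) ≫ _ = _
  rw [Category.assoc, ← v.map_comp]
  congr 2
  simp

noncomputable def PreIso.iso (P : PreIso u v) : u ≅ v where
  hom := P.fwd
  inv := P.bwd
  hom_inv_id := by
    apply AnaNat.ext'
    intro a a' h
    show (anaNatComp P.fwd P.bwd).app a a' h = (anaNatId u).app a a' h
    rw [anaNatComp_app _ _ a a' h (P.e a) (P.hcov a)]
    show (eqToHom _ ≫ v.map _ _ _) ≫ v.map _ _ _ ≫ eqToHom _ = u.map a a' (eqToHom h)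
    rw [P.hmap a a' (eqToHom h)]
    simp only [Category.assoc, eqToHom_trans, eqToHom_trans_assoc, eqToHom_self',
      eqToHom_refl, Category.comp_id, Category.id_comp]
    congr 1
    rw [← Category.assoc, ← v.map_comp]
    congr 2
    simp
  inv_hom_id := by
    apply AnaNat.ext'
    intro b b' h
    show (anaNatComp P.bwd P.fwd).app b b' h = (anaNatId v).app b b' h
    obtain ⟨a, ha⟩ := u.cov_surj (v.cov b)
    rw [anaNatComp_app _ _ b b' h a ha]
    show (v.map _ _ _ ≫ eqToHom _) ≫ eqToHom _ ≫ v.map _ _ _ = v.map b b' (eqToHom h)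
    simp only [Category.assoc, eqToHom_trans, eqToHom_trans_assoc, eqToHom_self',
      eqToHom_refl, Category.comp_id, Category.id_comp]
    rw [← v.map_comp]
    congr 1
    simp
/-- Left whiskering of a natural transformation by an anafunctor. -/
noncomputable def anaWhiskerLeft {X Y Z : SmallCat.{u}} (f : Anafunctor X Y)
    {g h : Anafunctor Y Z} (η : AnaNat g h) : AnaNat (anaComp f g) (anaComp f h) where
  app p q hpq :=
    η.gApp p.1.2 q.1.2 (eqToHom p.2 ≫ f.map p.1.1 q.1.1 (eqToHom hpq) ≫ eqToHom q.2.symm)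
  nat p p' q q' h1 h2 F := by
    show g.map p.1.2 p'.1.2 _ ≫ η.gApp _ _ _ =
      η.gApp _ _ _ ≫ h.map q.1.2 q'.1.2 (eqToHom q.2 ≫ f.map q.1.1 q'.1.1 _ ≫ eqToHom q'.2.symm)
    rw [AnaNat.map_comp_gApp, AnaNat.gApp_comp_map]
    congr 1
    simp only [Category.assoc, eqToHom_trans_assoc, eqToHom_self', Category.id_comp]
    rw [← Category.assoc (f.map p.1.1 p'.1.1 F), ← f.map_comp,
      ← Category.assoc (f.map p.1.1 q.1.1 _), ← f.map_comp]
    congr 2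
    simp

/-- Right whiskering of a natural transformation by an anafunctor. -/
def anaWhiskerRight {X Y Z : SmallCat.{u}} {g h : Anafunctor X Y} (η : AnaNat g h)
    (f : Anafunctor Y Z) : AnaNat (anaComp g f) (anaComp h f) where
  app p q hpq := f.map p.1.2 q.1.2 (eqToHom p.2 ≫ η.app p.1.1 q.1.1 hpq ≫ eqToHom q.2.symm)
  nat p p' q q' h1 h2 F := by
    show f.map p.1.2 p'.1.2 _ ≫ f.map p'.1.2 q'.1.2 _ =
      f.map p.1.2 q.1.2 _ ≫ f.map q.1.2 q'.1.2 _
    rw [← f.map_comp, ← f.map_comp]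
    congr 1
    simp only [Category.assoc, eqToHom_trans_assoc, eqToHom_self', Category.id_comp]
    rw [← Category.assoc (g.map p.1.1 p'.1.1 F), η.nat p.1.1 p'.1.1 q.1.1 q'.1.1 h1 h2 F]
    simp

/-- The left unitor as a `PreIso`. -/
def leftUnitorPre {X Y : SmallCat.{u}} (x : Anafunctor X Y) :
    PreIso (anaComp (anaId X) x) x where
  e p := p.1.2
  hcov p := p.2
  hobj _ := rfl
  hmap p q F := by simp [anaComp, anaId]

/-- The right unitor as a `PreIso`. -/
def rightUnitorPre {X Y : SmallCat.{u}} (x : Anafunctor X Y) :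
    PreIso (anaComp x (anaId Y)) x where
  e p := p.1.1
  hcov _ := rfl
  hobj p := p.2.symm
  hmap p q F := by simp [anaComp, anaId]

/-- The associator as a `PreIso`. -/
def associatorPre {W X Y Z : SmallCat.{u}} (x : Anafunctor W X) (y : Anafunctor X Y)
    (z : Anafunctor Y Z) : PreIso (anaComp (anaComp x y) z) (anaComp x (anaComp y z)) where
  e p := ⟨(p.1.1.1.1, ⟨(p.1.1.1.2, p.1.2), p.2⟩), p.1.1.2⟩
  hcov _ := rfl
  hobj _ := rfl
  hmap p q F := by simp [anaComp]

attribute [reducible] leftUnitorPre rightUnitorPre associatorPre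
theorem anaNatId_gApp {X Y : SmallCat.{u}} (g : Anafunctor X Y) (a b : g.S)
    (u : g.cov a ⟶ g.cov b) : (anaNatId g).gApp a b u = g.map a b u := by
  rw [AnaNat.gApp_eq _ a b u a rfl]
  show g.map a a (eqToHom _) ≫ _ = _
  rw [eqToHom_self', g.map_id, Category.id_comp]
  congr 1
  simp

theorem gApp_vcomp {X Y : SmallCat.{u}} {g h i : Anafunctor X Y} (η : AnaNat g h)
    (θ : AnaNat h i) (a : g.S) (b : h.S) (c : i.S) (u : g.cov a ⟶ h.cov b)
    (v : h.cov b ⟶ i.cov c) :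
    η.gApp a b u ≫ θ.gApp b c v = (anaNatComp η θ).gApp a c (u ≫ v) := by
  obtain ⟨b₀, hb₀⟩ := h.cov_surj (g.cov a)
  obtain ⟨c₀, hc₀⟩ := i.cov_surj (g.cov a)
  rw [η.gApp_eq a b u b₀ hb₀, Category.assoc, AnaNat.map_comp_gApp,
    AnaNat.gApp_eq (anaNatComp η θ) a c (u ≫ v) c₀ hc₀,
    anaNatComp_app η θ a c₀ hc₀.symm b₀ hb₀]
  simp only [Category.assoc]
  rw [AnaNat.app_comp_map]
  congr 2
  simp

theorem gApp_vcomp' {X Y : SmallCat.{u}} {g h i : Anafunctor X Y} (η : AnaNat g h)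
    (θ : AnaNat h i) (a : g.S) (b : h.S) (c : i.S) (u : g.cov a ⟶ h.cov b)
    (v : h.cov b ⟶ i.cov c) (w : g.cov a ⟶ i.cov c) (hw : w = u ≫ v) :
    (anaNatComp η θ).gApp a c w = η.gApp a b u ≫ θ.gApp b c v := by
  rw [hw, gApp_vcomp]

theorem anaWhiskerLeft_gApp {X Y Z : SmallCat.{u}} (f : Anafunctor X Y)
    {g h : Anafunctor Y Z} (η : AnaNat g h) (p : (anaComp f g).S) (q : (anaComp f h).S)
    (w : f.cov p.1.1 ⟶ f.cov q.1.1) :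
    (anaWhiskerLeft f η).gApp p q w =
      η.gApp p.1.2 q.1.2 (eqToHom p.2 ≫ f.map p.1.1 q.1.1 w ≫ eqToHom q.2.symm) := by
  obtain ⟨b, hb⟩ := h.cov_surj (f.obj p.1.1)
  have hm : (anaComp f h).cov ⟨(p.1.1, b), hb⟩ = (anaComp f g).cov p := rfl
  rw [AnaNat.gApp_eq (anaWhiskerLeft f η) p q w ⟨(p.1.1, b), hb⟩ hm]
  show η.gApp p.1.2 b _ ≫ h.map b q.1.2 _ = _
  rw [AnaNat.gApp_comp_map]
  congr 1
  simp [f.map_id]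

theorem anaWhiskerRight_gApp {X Y Z : SmallCat.{u}} {g h : Anafunctor X Y}
    (η : AnaNat g h) (f : Anafunctor Y Z) (p : (anaComp g f).S) (q : (anaComp h f).S)
    (w : g.cov p.1.1 ⟶ h.cov q.1.1) :
    (anaWhiskerRight η f).gApp p q w =
      f.map p.1.2 q.1.2 (eqToHom p.2 ≫ η.gApp p.1.1 q.1.1 w ≫ eqToHom q.2.symm) := by
  obtain ⟨bh, hbh⟩ := h.cov_surj (g.cov p.1.1)
  obtain ⟨bf, hbf⟩ := f.cov_surj (h.obj bh)
  have hm : (anaComp h f).cov ⟨(bh, bf), hbf⟩ = (anaComp g f).cov p := hbh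
  rw [AnaNat.gApp_eq (anaWhiskerRight η f) p q w ⟨(bh, bf), hbf⟩ hm]
  show f.map p.1.2 bf _ ≫ f.map bf q.1.2 _ = _
  rw [← f.map_comp]
  congr 1
  rw [η.gApp_eq p.1.1 q.1.1 w bh hbh]
  simp

theorem PreIso.bwd_gApp {X Y : SmallCat.{u}} {u v : Anafunctor X Y} (P : PreIso u v)
    (b : v.S) (a : u.S) (w : v.cov b ⟶ u.cov a) :
    P.bwd.gApp b a w = v.map b (P.e a) (w ≫ eqToHom (P.hcov a).symm) ≫ eqToHom (P.hobj a) := by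
  obtain ⟨a₀, ha₀⟩ := u.cov_surj (v.cov b)
  rw [AnaNat.gApp_eq P.bwd b a w a₀ ha₀]
  show (v.map b (P.e a₀) _ ≫ eqToHom _) ≫ u.map a₀ a _ = _
  rw [P.hmap a₀ a]
  simp only [Category.assoc, eqToHom_trans_assoc, eqToHom_self', Category.id_comp]
  rw [← Category.assoc, ← v.map_comp]
  congr 2
  simp
section Laws
variable {V W X Y Z : SmallCat.{u}}

theorem lawA (f : Anafunctor X Y) (g : Anafunctor Y Z) :
    anaWhiskerLeft f (anaNatId g) = anaNatId (anaComp f g) := by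
  apply AnaNat.ext'
  intro p q hpq
  show (anaNatId g).gApp _ _ _ = (anaComp f g).map p q (eqToHom hpq)
  rw [anaNatId_gApp]

theorem lawB (f : Anafunctor X Y) {g h i : Anafunctor Y Z} (η : AnaNat g h) (θ : AnaNat h i) :
    anaWhiskerLeft f (anaNatComp η θ) =
      anaNatComp (anaWhiskerLeft f η) (anaWhiskerLeft f θ) := by
  apply AnaNat.ext'
  intro p q hpq
  obtain ⟨b, hb⟩ := h.cov_surj (g.cov p.1.2)
  have hm : (anaComp f h).cov (⟨(p.1.1, b), hb.trans p.2⟩ : {r : f.S × h.S // h.cov r.2 = f.obj r.1}) = (anaComp f g).cov p := rfl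
  rw [anaNatComp_app _ _ p q hpq (⟨(p.1.1, b), hb.trans p.2⟩ : {r : f.S × h.S // h.cov r.2 = f.obj r.1}) hm]
  show (anaNatComp η θ).gApp p.1.2 q.1.2 _ = η.gApp _ _ _ ≫ θ.gApp _ _ _
  rw [gApp_vcomp]
  congr 1
  simp [f.map_id]

theorem lawE {g : Anafunctor X Y} (f : Anafunctor Y Z) :
    anaWhiskerRight (anaNatId g) f = anaNatId (anaComp g f) := rfl

theorem lawF {g h i : Anafunctor X Y} (η : AnaNat g h) (θ : AnaNat h i) (f : Anafunctor Y Z) :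
    anaWhiskerRight (anaNatComp η θ) f =
      anaNatComp (anaWhiskerRight η f) (anaWhiskerRight θ f) := by
  apply AnaNat.ext'
  intro p q hpq
  obtain ⟨bh, hbh⟩ := h.cov_surj (g.cov p.1.1)
  obtain ⟨bf, hbf⟩ := f.cov_surj (h.obj bh)
  have hm : (anaComp h f).cov (⟨(bh, bf), hbf⟩ : {r : h.S × f.S // f.cov r.2 = h.obj r.1}) = (anaComp g f).cov p := hbh
  rw [anaNatComp_app _ _ p q hpq (⟨(bh, bf), hbf⟩ : {r : h.S × f.S // f.cov r.2 = h.obj r.1}) hm]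
  show f.map p.1.2 q.1.2 _ = f.map p.1.2 bf _ ≫ f.map bf q.1.2 _
  rw [← f.map_comp]
  congr 1
  rw [anaNatComp_app η θ p.1.1 q.1.1 hpq bh hbh]
  simp
end Laws
section Laws2
variable {X Y Z : SmallCat.{u}}

theorem lawC {g h : Anafunctor X Y} (η : AnaNat g h) :
    anaWhiskerLeft (anaId X) η =
      anaNatComp (leftUnitorPre g).fwd (anaNatComp η (leftUnitorPre h).bwd) := by
  apply AnaNat.ext'
  intro p q hpq
  have hb : g.cov p.1.2 = (anaComp (anaId X) g).cov p := p.2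
  rw [anaNatComp_app _ _ p q hpq p.1.2 hb]
  have hb2 : h.cov q.1.2 = g.cov p.1.2 := q.2.trans (hpq.symm.trans p.2.symm)
  rw [anaNatComp_app η _ p.1.2 q (hb.trans hpq) q.1.2 hb2]
  have harg : (eqToHom p.2 ≫ (anaId X).map p.1.1 q.1.1 (eqToHom hpq) ≫ eqToHom q.2.symm :
      g.cov p.1.2 ⟶ h.cov q.1.2) = eqToHom hb2.symm := by
    show eqToHom p.2 ≫ eqToHom hpq ≫ eqToHom q.2.symm = _
    simp
  show η.gApp p.1.2 q.1.2 (eqToHom p.2 ≫ (anaId X).map p.1.1 q.1.1 (eqToHom hpq) ≫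
    eqToHom q.2.symm) = _
  rw [harg, AnaNat.gApp_eqToHom]
  simp only [PreIso.fwd, PreIso.bwd, leftUnitorPre, eqToHom_self', eqToHom_refl,
    Category.id_comp, Category.comp_id, g.map_id, h.map_id]

theorem lawG {g h : Anafunctor X Y} (η : AnaNat g h) :
    anaWhiskerRight η (anaId Y) =
      anaNatComp (rightUnitorPre g).fwd (anaNatComp η (rightUnitorPre h).bwd) := by
  apply AnaNat.ext'
  intro p q hpq
  have hb : g.cov p.1.1 = (anaComp g (anaId Y)).cov p := rfl
  rw [anaNatComp_app _ _ p q hpq p.1.1 hb]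
  have hb2 : h.cov q.1.1 = g.cov p.1.1 := hpq.symm
  rw [anaNatComp_app η _ p.1.1 q (hb.trans hpq) q.1.1 hb2]
  simp [anaWhiskerRight, PreIso.fwd, PreIso.bwd, rightUnitorPre, anaId,
    g.map_id, h.map_id]
end Laws2
section Laws3
variable {W X Y Z : SmallCat.{u}}

theorem anaWhiskerLeft_app (f : Anafunctor X Y) {g h : Anafunctor Y Z} (η : AnaNat g h)
    (p : (anaComp f g).S) (q : (anaComp f h).S) (hpq : (anaComp f g).cov p = (anaComp f h).cov q) :
    (anaWhiskerLeft f η).app p q hpq =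
      η.gApp p.1.2 q.1.2 (eqToHom p.2 ≫ f.map p.1.1 q.1.1 (eqToHom hpq) ≫ eqToHom q.2.symm) :=
  rfl

theorem anaWhiskerRight_app {g h : Anafunctor X Y} (η : AnaNat g h) (f : Anafunctor Y Z)
    (p : (anaComp g f).S) (q : (anaComp h f).S) (hpq : (anaComp g f).cov p = (anaComp h f).cov q) :
    (anaWhiskerRight η f).app p q hpq =
      f.map p.1.2 q.1.2 (eqToHom p.2 ≫ η.app p.1.1 q.1.1 hpq ≫ eqToHom q.2.symm) :=
  rfl

/-- Reassociation of specifications, from right-nested to left-nested. -/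
def assocE' (f : Anafunctor W X) (g : Anafunctor X Y) (h : Anafunctor Y Z)
    (r : (anaComp f (anaComp g h)).S) : (anaComp (anaComp f g) h).S :=
  ⟨(⟨(r.1.1, r.1.2.1.1), r.2⟩, r.1.2.1.2), r.1.2.2⟩

attribute [reducible] assocE'

theorem lawJ {f g : Anafunctor X Y} {h i : Anafunctor Y Z} (η : AnaNat f g) (θ : AnaNat h i) :
    anaNatComp (anaWhiskerLeft f θ) (anaWhiskerRight η i) =
      anaNatComp (anaWhiskerRight η h) (anaWhiskerLeft g θ) := by
  apply AnaNat.ext'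
  intro p q hpq
  obtain ⟨ci, hci⟩ := i.cov_surj (f.obj p.1.1)
  obtain ⟨ch, hch⟩ := h.cov_surj (g.obj q.1.1)
  have hm : (anaComp f i).cov (⟨(p.1.1, ci), hci⟩ : {r : f.S × i.S // i.cov r.2 = f.obj r.1})
      = (anaComp f h).cov p := rfl
  have hm' : (anaComp g h).cov (⟨(q.1.1, ch), hch⟩ : {r : g.S × h.S // h.cov r.2 = g.obj r.1})
      = (anaComp f h).cov p := hpq.symm
  rw [anaNatComp_app _ _ p q hpq _ hm, anaNatComp_app _ _ p q hpq _ hm']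
  show θ.gApp p.1.2 ci _ ≫ i.map ci q.1.2 _ = h.map p.1.2 ch _ ≫ θ.gApp ch q.1.2 _
  rw [AnaNat.gApp_comp_map, AnaNat.map_comp_gApp]
  congr 1
  simp [f.map_id, g.map_id]

theorem lawD (f : Anafunctor W X) (g : Anafunctor X Y) {h h' : Anafunctor Y Z}
    (η : AnaNat h h') :
    anaWhiskerLeft (anaComp f g) η =
      anaNatComp (associatorPre f g h).fwd
        (anaNatComp (anaWhiskerLeft f (anaWhiskerLeft g η)) (associatorPre f g h').bwd) := by
  apply AnaNat.ext'
  intro p q hpq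
  rw [anaNatComp_app _ _ p q hpq ((associatorPre f g h).e p) rfl]
  rw [anaNatComp_app _ _ ((associatorPre f g h).e p) q hpq ((associatorPre f g h').e q)
    hpq.symm]
  rw [anaWhiskerLeft_app (anaComp f g) η p q hpq,
    anaWhiskerLeft_app f (anaWhiskerLeft g η) _ _ _, anaWhiskerLeft_gApp g η]
  simp only [anaComp, PreIso.fwd, PreIso.bwd, associatorPre, eqToHom_self', eqToHom_refl,
    eqToHom_trans, eqToHom_trans_assoc, Anafunctor.map_id'', Anafunctor.map_map,
    Anafunctor.map_map_assoc, Category.id_comp, Category.comp_id, Category.assoc,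
    Prod.mk.eta, Subtype.coe_eta]

theorem lawH {f f' : Anafunctor W X} (η : AnaNat f f') (g : Anafunctor X Y)
    (h : Anafunctor Y Z) :
    anaWhiskerRight η (anaComp g h) =
      anaNatComp (associatorPre f g h).bwd
        (anaNatComp (anaWhiskerRight (anaWhiskerRight η g) h) (associatorPre f' g h).fwd) := by
  apply AnaNat.ext'
  intro p q hpq
  rw [anaNatComp_app _ _ p q hpq (assocE' f g h p) rfl]
  rw [anaNatComp_app _ _ (assocE' f g h p) q hpq (assocE' f' g h q) hpq.symm]
  rw [anaWhiskerRight_app η (anaComp g h) p q hpq,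
    anaWhiskerRight_app (anaWhiskerRight η g) h _ _ _, anaWhiskerRight_app η g _ _ _]
  simp only [anaComp, assocE', PreIso.fwd, PreIso.bwd, associatorPre, eqToHom_self',
    eqToHom_refl, eqToHom_trans, eqToHom_trans_assoc, Anafunctor.map_id'',
    Anafunctor.map_map, Anafunctor.map_map_assoc, Category.id_comp, Category.comp_id,
    Category.assoc, Prod.mk.eta, Subtype.coe_eta]

theorem lawI (f : Anafunctor W X) {g g' : Anafunctor X Y} (η : AnaNat g g')
    (h : Anafunctor Y Z) :
    anaWhiskerRight (anaWhiskerLeft f η) h =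
      anaNatComp (associatorPre f g h).fwd
        (anaNatComp (anaWhiskerLeft f (anaWhiskerRight η h)) (associatorPre f g' h).bwd) := by
  apply AnaNat.ext'
  intro p q hpq
  rw [anaNatComp_app _ _ p q hpq ((associatorPre f g h).e p) rfl]
  rw [anaNatComp_app _ _ ((associatorPre f g h).e p) q hpq ((associatorPre f g' h).e q)
    hpq.symm]
  rw [anaWhiskerRight_app (anaWhiskerLeft f η) h p q hpq,
    anaWhiskerLeft_app f η _ _ _,
    anaWhiskerLeft_app f (anaWhiskerRight η h) _ _ _, anaWhiskerRight_gApp η h]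
  simp only [anaComp, PreIso.fwd, PreIso.bwd, associatorPre, eqToHom_self', eqToHom_refl,
    eqToHom_trans, eqToHom_trans_assoc, Anafunctor.map_id'', Anafunctor.map_map,
    Anafunctor.map_map_assoc, Category.id_comp, Category.comp_id, Category.assoc,
    Prod.mk.eta, Subtype.coe_eta]
end Laws3
section Laws4
variable {V W X Y Z : SmallCat.{u}}

theorem lawL (f : Anafunctor X Y) (g : Anafunctor Y Z) :
    anaNatComp (associatorPre f (anaId Y) g).fwd
      (anaWhiskerLeft f (leftUnitorPre g).fwd) =
    anaWhiskerRight (rightUnitorPre f).fwd g := by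
  apply AnaNat.ext'
  intro p q hpq
  rw [anaNatComp_app _ _ p q hpq ((associatorPre f (anaId Y) g).e p) rfl]
  rw [anaWhiskerLeft_app f (leftUnitorPre g).fwd _ _ _, PreIso.fwd_gApp,
    anaWhiskerRight_app (rightUnitorPre f).fwd g p q hpq]
  simp only [anaComp, anaId, PreIso.fwd, PreIso.bwd, associatorPre, leftUnitorPre,
    rightUnitorPre, eqToHom_self', eqToHom_refl, eqToHom_trans, eqToHom_trans_assoc,
    Anafunctor.map_id'', Anafunctor.map_map, Anafunctor.map_map_assoc, Category.id_comp,
    Category.comp_id, Category.assoc, Prod.mk.eta, Subtype.coe_eta]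

theorem lawK (f : Anafunctor V W) (g : Anafunctor W X) (h : Anafunctor X Y)
    (i : Anafunctor Y Z) :
    anaNatComp (anaWhiskerRight (associatorPre f g h).fwd i)
      (anaNatComp (associatorPre f (anaComp g h) i).fwd
        (anaWhiskerLeft f (associatorPre g h i).fwd)) =
    anaNatComp (associatorPre (anaComp f g) h i).fwd
      (associatorPre f g (anaComp h i)).fwd := by
  apply AnaNat.ext'
  intro p q hpq
  rw [anaNatComp_app _ _ p q hpq (⟨((associatorPre f g h).e p.1.1, p.1.2), p.2⟩ : {r : (anaComp f (anaComp g h)).S × i.S // i.cov r.2 = (anaComp f (anaComp g h)).obj r.1}) rfl]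
  rw [anaNatComp_app (associatorPre f (anaComp g h) i).fwd
    (anaWhiskerLeft f (associatorPre g h i).fwd) (⟨((associatorPre f g h).e p.1.1, p.1.2), p.2⟩ : {r : (anaComp f (anaComp g h)).S × i.S // i.cov r.2 = (anaComp f (anaComp g h)).obj r.1}) q (Eq.trans rfl hpq)
    ((associatorPre f (anaComp g h) i).e (⟨((associatorPre f g h).e p.1.1, p.1.2), p.2⟩ : {r : (anaComp f (anaComp g h)).S × i.S // i.cov r.2 = (anaComp f (anaComp g h)).obj r.1})) rfl]
  rw [anaNatComp_app _ _ p q hpq ((associatorPre (anaComp f g) h i).e p) rfl]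
  rw [anaWhiskerRight_app (associatorPre f g h).fwd i p (⟨((associatorPre f g h).e p.1.1, p.1.2), p.2⟩ : {r : (anaComp f (anaComp g h)).S × i.S // i.cov r.2 = (anaComp f (anaComp g h)).obj r.1}) (Eq.symm rfl),
    anaWhiskerLeft_app f (associatorPre g h i).fwd _ _ _, PreIso.fwd_gApp]
  simp only [anaComp, PreIso.fwd, PreIso.bwd, associatorPre, eqToHom_self', eqToHom_refl,
    eqToHom_trans, eqToHom_trans_assoc, Anafunctor.map_id'', Anafunctor.map_map,
    Anafunctor.map_map_assoc, Category.id_comp, Category.comp_id, Category.assoc,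
    Prod.mk.eta, Subtype.coe_eta]
end Laws4
/-- The bicategory of small categories, anafunctors, and natural transformations. -/
noncomputable def anaBicategory : Bicategory.{u, u + 1, u + 1} SmallCat.{u} where
  Hom X Y := Anafunctor X Y
  id := anaId
  comp := anaComp
  homCategory := anaCategory
  whiskerLeft := fun {a b c} f {g h} η => anaWhiskerLeft f η
  whiskerRight := fun {a b c} {f g} η h => anaWhiskerRight η h
  associator f g h := (associatorPre f g h).iso
  leftUnitor f := (leftUnitorPre f).iso
  rightUnitor f := (rightUnitorPre f).iso
  whiskerLeft_id := fun {a b c} f g => lawA f g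
  whiskerLeft_comp := fun {a b c} f {g h i} η θ => lawB f η θ
  id_whiskerLeft := fun {a b} {f g} η => lawC η
  comp_whiskerLeft := fun {a b c d} f g {h h'} η => lawD f g η
  id_whiskerRight := fun {a b c} f g => lawE g
  comp_whiskerRight := fun {a b c} {f g h} η θ i => lawF η θ i
  whiskerRight_id := fun {a b} {f g} η => lawG η
  whiskerRight_comp := fun {a b c d} {f f'} η g h => lawH η g h
  whisker_assoc := fun {a b c d} f {g g'} η h => lawI f η h
  whisker_exchange := fun {a b c} {f g h i} η θ => lawJ η θ
  pentagon := fun {a b c d e} f g h i => lawK f g h i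
  triangle := fun {a b c} f g => lawL f g

/-- small categories, anafunctors, and natural transformations between
anafunctors form a bicategory, in which the identity anafunctor, the composite of
anafunctors, and the vertical composite of natural transformations are as specified
(the latter characterized by `(χ;ψ)(a, c) = χ(a, b) ≫ ψ(b, c)` for any valid `b`,
independently of the choice of `b`). -/
theorem stmt11 :
    ∃ inst : Bicategory.{u, u + 1, u + 1} SmallCat.{u},
      (@Quiver.Hom SmallCat.{u} inst.toCategoryStruct.toQuiver =
        fun X Y => Anafunctor X Y) ∧
      (∀ X : SmallCat.{u},
        HEq (@CategoryStruct.id SmallCat.{u} inst.toCategoryStruct X) (anaId X)) ∧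
      (∀ (X Y Z : SmallCat.{u})
          (f : @Quiver.Hom SmallCat.{u} inst.toCategoryStruct.toQuiver X Y)
          (g : @Quiver.Hom SmallCat.{u} inst.toCategoryStruct.toQuiver Y Z)
          (f' : Anafunctor X Y) (g' : Anafunctor Y Z),
        HEq f f' → HEq g g' →
        HEq (@CategoryStruct.comp SmallCat.{u} inst.toCategoryStruct X Y Z f g)
          (anaComp f' g')) ∧
      (∀ (X Y : SmallCat.{u})
          (x y : @Quiver.Hom SmallCat.{u} inst.toCategoryStruct.toQuiver X Y)
          (x' y' : Anafunctor X Y), HEq x x' → HEq y y' →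
        @Quiver.Hom _ (inst.homCategory X Y).toCategoryStruct.toQuiver x y =
          AnaNat x' y') ∧
      (∀ (X Y : SmallCat.{u})
          (x y z : @Quiver.Hom SmallCat.{u} inst.toCategoryStruct.toQuiver X Y)
          (x' y' z' : Anafunctor X Y), HEq x x' → HEq y y' → HEq z z' →
        ∀ (χ : @Quiver.Hom _ (inst.homCategory X Y).toCategoryStruct.toQuiver x y)
          (ψ : @Quiver.Hom _ (inst.homCategory X Y).toCategoryStruct.toQuiver y z)
          (χ' : AnaNat x' y') (ψ' : AnaNat y' z'), HEq χ χ' → HEq ψ ψ' →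
        ∀ vc : AnaNat x' z',
          (∀ (a : x'.S) (c : z'.S) (h : x'.cov a = z'.cov c) (b : y'.S)
              (hb : y'.cov b = x'.cov a),
            vc.app a c h = χ'.app a b hb.symm ≫ ψ'.app b c (hb.trans h)) →
          HEq (@CategoryStruct.comp _ (inst.homCategory X Y).toCategoryStruct x y z χ ψ)
            vc) := by
  refine ⟨anaBicategory, ?_, ?_, ?_, ?_, ?_⟩
  · exact rfl
  · intro X
    exact HEq.rfl
  · intro X Y Z f g f' g' hf hg
    obtain rfl := eq_of_heq hf
    obtain rfl := eq_of_heq hg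
    exact HEq.rfl
  · intro X Y x y x' y' hx hy
    obtain rfl := eq_of_heq hx
    obtain rfl := eq_of_heq hy
    rfl
  · intro X Y x y z x' y' z' hx hy hz
    obtain rfl := eq_of_heq hx
    obtain rfl := eq_of_heq hy
    obtain rfl := eq_of_heq hz
    intro χ ψ χ' ψ' hχ hψ
    obtain rfl := eq_of_heq hχ
    obtain rfl := eq_of_heq hψ
    intro vc hvc
    refine heq_of_eq ?_
    apply AnaNat.ext'
    intro a c hcov
    obtain ⟨b, hb⟩ := y.cov_surj (x.cov a)
    rw [show (@CategoryStruct.comp _ (anaBicategory.homCategory X Y).toCategoryStruct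
      x y z χ ψ) = anaNatComp χ ψ from rfl]
    rw [anaNatComp_app χ ψ a c hcov b hb, hvc a c hcov b hb]
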